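/- Let A, B be C*-algebras, r > 0, and H : B_A(0;r) → B a holomorphic map with Taylor expansion H = ∑_{n≥0} P_n at 0. If H is zero product preserving on B_A(0;r) (i.e., ab = 0 implies H(a)H(b) = 0 for a, b ∈ B_A(0;r)), then for all m, n ≥ 0 and all a, b ∈ A with ab = 0 one has P_m(a)P_n(b) = 0. -/

import Mathlib

open ContinuousLinearMap in
private lemma stmt3_aux_comp {A B : Type*} [NonUnitalCStarAlgebra A] [NonUnitalCStarAlgebra B]
    {r : ℝ} (H : A → B) (p : FormalMultilinearSeries ℂ A B)
    (hH : HasFPowerSeriesOnBall H p 0 (ENNReal.ofReal r)) (a : A) (ha : ‖a‖ < r) :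
    HasFPowerSeriesOnBall (fun s : ℂ => H (s • a))
      (p.compContinuousLinearMap (toSpanSingleton ℂ a)) 0 1 := by
  have hrad : (‖a‖₊ : ENNReal) < p.radius := by
    rw [← ENNReal.ofReal_coe_nnreal, coe_nnnorm]
    exact lt_of_lt_of_le ((ENNReal.ofReal_lt_ofReal_iff ((norm_nonneg a).trans_lt ha)).2 ha)
      hH.r_le
  obtain ⟨C, -, hC⟩ := p.norm_mul_pow_le_of_lt_radius hrad
  refine ⟨?_, one_pos, fun {y} hy => ?_⟩
  · refine FormalMultilinearSeries.le_radius_of_bound _ C fun n => ?_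
    have h1 : ‖(p.compContinuousLinearMap (toSpanSingleton ℂ a)) n‖ ≤ ‖p n‖ * ‖a‖ ^ n := by
      refine le_trans (ContinuousMultilinearMap.norm_compContinuousLinearMap_le _ _) ?_
      simp [norm_toSpanSingleton]
    calc ‖(p.compContinuousLinearMap (toSpanSingleton ℂ a)) n‖ * (1 : NNReal) ^ n
        ≤ ‖p n‖ * ‖a‖ ^ n := by simpa using h1
      _ ≤ C := by simpa using hC n
  · have hy' : ‖y‖ < 1 := by
      have := Metric.mem_eball.1 hy
      rwa [edist_zero_right, ← ofReal_norm, ENNReal.ofReal_lt_one] at this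
    have hmem : y • a ∈ Metric.eball (0 : A) (ENNReal.ofReal r) := by
      rw [Metric.mem_eball, edist_zero_right, ← ofReal_norm]
      refine (ENNReal.ofReal_lt_ofReal_iff ((norm_nonneg a).trans_lt ha)).2 ?_
      calc ‖y • a‖ = ‖y‖ * ‖a‖ := norm_smul y a
        _ ≤ ‖a‖ := mul_le_of_le_one_left (norm_nonneg a) hy'.le
        _ < r := ha
    have heq : (fun n => (p.compContinuousLinearMap (toSpanSingleton ℂ a)) n fun _ => y)
        = fun n => p n fun _ => y • a := by
      funext n
      rw [FormalMultilinearSeries.compContinuousLinearMap_apply]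
      congr 1
    simp only [zero_add, heq]
    simpa using hH.hasSum hmem

open ContinuousLinearMap in
private lemma stmt3_main {A B : Type*} [NonUnitalCStarAlgebra A] [NonUnitalCStarAlgebra B]
    {r : ℝ} (H : A → B) (p : FormalMultilinearSeries ℂ A B)
    (hH : HasFPowerSeriesOnBall H p 0 (ENNReal.ofReal r))
    (hzp : ∀ a b : A, ‖a‖ < r → ‖b‖ < r → a * b = 0 → H a * H b = 0)
    (m n : ℕ) (a b : A) (ha : ‖a‖ < r) (hb : ‖b‖ < r) (hab : a * b = 0) :
    (p m fun _ => a) * (p n fun _ => b) = 0 := by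
  have qa := stmt3_aux_comp H p hH a ha
  have qb := stmt3_aux_comp H p hH b hb
  have hsmul : ∀ s t : ℂ, (s • a) * (t • b) = 0 := by
    intro s t
    rw [smul_mul_assoc, mul_smul_comm, hab, smul_zero, smul_zero]
  have hnorm : ∀ (s : ℂ) (c : A), ‖c‖ < r → ‖s‖ < 1 → ‖s • c‖ < r := by
    intro s c hc hs
    calc ‖s • c‖ = ‖s‖ * ‖c‖ := norm_smul s c
      _ ≤ ‖c‖ := mul_le_of_le_one_left (norm_nonneg c) hs.le
      _ < r := hc
  -- Step A: (p m fun _ => a) * H (t • b) = 0 for ‖t‖ < 1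
  have stepA : ∀ t : ℂ, ‖t‖ < 1 → (p m fun _ => a) * H (t • b) = 0 := by
    intro t ht
    set d := H (t • b) with hd
    let g : B →L[ℂ] B := (ContinuousLinearMap.mul ℂ B).flip d
    have hF := g.comp_hasFPowerSeriesOnBall qa
    have hz : HasFPowerSeriesAt (0 : ℂ → B)
        (g.compFormalMultilinearSeries
          (p.compContinuousLinearMap (toSpanSingleton ℂ a))) 0 := by
      refine hF.hasFPowerSeriesAt.congr ?_
      filter_upwards [Metric.ball_mem_nhds (0 : ℂ) one_pos] with s hs
      have hs' : ‖s‖ < 1 := by simpa using hs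
      show g (H (s • a)) = 0
      have : H (s • a) * d = 0 :=
        hzp _ _ (hnorm s a ha hs') (hnorm t b hb ht) (hsmul s t)
      simpa [g, flip_apply, mul_apply'] using this
    have := hz.apply_eq_zero m 1
    simp only [compFormalMultilinearSeries_apply, compContinuousMultilinearMap_coe,
      Function.comp_apply, FormalMultilinearSeries.compContinuousLinearMap_apply,
      Function.comp_def, toSpanSingleton_apply, one_smul, flip_apply, mul_apply',
      Pi.zero_apply] at this
    exact this
  -- Step B
  set c := (p m fun _ => a) with hc
  let g : B →L[ℂ] B := (ContinuousLinearMap.mul ℂ B) c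
  have hF := g.comp_hasFPowerSeriesOnBall qb
  have hz : HasFPowerSeriesAt (0 : ℂ → B)
      (g.compFormalMultilinearSeries
        (p.compContinuousLinearMap (toSpanSingleton ℂ b))) 0 := by
    refine hF.hasFPowerSeriesAt.congr ?_
    filter_upwards [Metric.ball_mem_nhds (0 : ℂ) one_pos] with t ht
    have ht' : ‖t‖ < 1 := by simpa using ht
    show g (H (t • b)) = 0
    simpa [g, mul_apply'] using stepA t ht'
  have := hz.apply_eq_zero n 1
  simp only [compFormalMultilinearSeries_apply, compContinuousMultilinearMap_coe,
    Function.comp_apply, FormalMultilinearSeries.compContinuousLinearMap_apply,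
    Function.comp_def, toSpanSingleton_apply, one_smul, mul_apply',
    Pi.zero_apply] at this
  exact this

/-- if the holomorphic map `H = ∑ₙ Pₙ` on `B_A(0;r)` preserves zero
products, then its Taylor coefficients satisfy `Pₘ(a)Pₙ(b) = 0` whenever `ab = 0`. -/
theorem stmt_3 {A B : Type*} [NonUnitalCStarAlgebra A] [NonUnitalCStarAlgebra B]
    {r : ℝ} (hr : 0 < r) (H : A → B) (p : FormalMultilinearSeries ℂ A B)
    (hH : HasFPowerSeriesOnBall H p 0 (ENNReal.ofReal r))
    (hzp : ∀ a b : A, ‖a‖ < r → ‖b‖ < r → a * b = 0 → H a * H b = 0) :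
    ∀ (m n : ℕ) (a b : A), a * b = 0 →
      (p m fun _ => a) * (p n fun _ => b) = 0 := by
  intro m n a b hab
  -- scale down a and b
  set c : ℝ := r / (r + ‖a‖ + ‖b‖) with hcdef
  have hden : 0 < r + ‖a‖ + ‖b‖ := by positivity
  have hcpos : 0 < c := div_pos hr hden
  have hca : ‖(c : ℂ) • a‖ < r := by
    rw [norm_smul, Complex.norm_real, Real.norm_eq_abs, abs_of_pos hcpos, hcdef,
      div_mul_eq_mul_div, div_lt_iff₀ hden]
    nlinarith [norm_nonneg a, norm_nonneg b]
  have hcb : ‖(c : ℂ) • b‖ < r := by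
    rw [norm_smul, Complex.norm_real, Real.norm_eq_abs, abs_of_pos hcpos, hcdef,
      div_mul_eq_mul_div, div_lt_iff₀ hden]
    nlinarith [norm_nonneg a, norm_nonneg b]
  have hab' : ((c : ℂ) • a) * ((c : ℂ) • b) = 0 := by
    rw [smul_mul_assoc, mul_smul_comm, hab, smul_zero, smul_zero]
  have h0 := stmt3_main H p hH hzp m n _ _ hca hcb hab'
  have hma : (p m fun _ => (c : ℂ) • a) = (c : ℂ) ^ m • (p m fun _ => a) := by
    rw [ContinuousMultilinearMap.map_smul_univ]
    simp
  have hnb : (p n fun _ => (c : ℂ) • b) = (c : ℂ) ^ n • (p n fun _ => b) := by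
    rw [ContinuousMultilinearMap.map_smul_univ]
    simp
  rw [hma, hnb, smul_mul_assoc, mul_smul_comm, smul_smul, smul_eq_zero] at h0
  rcases h0 with h | h
  · exfalso
    have : (c : ℂ) ≠ 0 := by
      simpa using hcpos.ne'
    exact (pow_ne_zero n this) (by
      rcases mul_eq_zero.mp h with h' | h'
      · exact absurd h' (pow_ne_zero m this)
      · exact h')
  · exact h
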